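/- arXiv:2312.16458 — 2 statements merged into one kernel-verified Lean document; each statement's English description precedes it below -/
import Mathlib

section
/- Let μ^∞ and, for each n ∈ ℕ, μ^n be vectors of positive reals of length N such that μ^n_k → μ^∞_k as n → ∞ for each k ∈ {1,…,N}. Then the closed unit balls D_{μ^n} converge to D_{μ^∞} in the Hausdorff distance with respect to the C*-norm ‖·‖_A, i.e., Haus_{‖·‖_A}(D_{μ^n}, D_{μ^∞}) → 0 as n → ∞. -/
open Filter Topology

noncomputable abbrev BlockAlg (N : ℕ) (m : Fin N → ℕ) : Type :=
  ∀ k : Fin N, EuclideanSpace ℂ (Fin (m k)) →L[ℂ] EuclideanSpace ℂ (Fin (m k))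

noncomputable def hsNorm {N : ℕ} {m : Fin N → ℕ} (μ : Fin N → ℝ) (a : BlockAlg N m) : ℝ :=
  Real.sqrt (∑ k, (μ k / (m k : ℝ)) *
    (LinearMap.trace ℂ (EuclideanSpace ℂ (Fin (m k)))
      ((ContinuousLinearMap.adjoint (a k) ∘L a k :
          EuclideanSpace ℂ (Fin (m k)) →L[ℂ] EuclideanSpace ℂ (Fin (m k))) :
        EuclideanSpace ℂ (Fin (m k)) →ₗ[ℂ] EuclideanSpace ℂ (Fin (m k)))).re)

noncomputable def hsBall {N : ℕ} {m : Fin N → ℕ} (μ : Fin N → ℝ) : Set (BlockAlg N m) :=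
  {a | hsNorm μ a ≤ 1}

namespace HSAux

open ContinuousLinearMap

lemma traceRe_eq {n : ℕ} (a : EuclideanSpace ℂ (Fin n) →L[ℂ] EuclideanSpace ℂ (Fin n)) :
    (LinearMap.trace ℂ (EuclideanSpace ℂ (Fin n))
        ((adjoint a ∘L a : EuclideanSpace ℂ (Fin n) →L[ℂ] EuclideanSpace ℂ (Fin n)) :
          EuclideanSpace ℂ (Fin n) →ₗ[ℂ] EuclideanSpace ℂ (Fin n))).re
      = ∑ i, ‖a (EuclideanSpace.single i 1)‖ ^ 2 := by
  rw [LinearMap.trace_eq_matrix_trace ℂ (EuclideanSpace.basisFun (Fin n) ℂ).toBasis]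
  rw [Matrix.trace, Complex.re_sum]
  congr 1
  ext i
  rw [Matrix.diag_apply, LinearMap.toMatrix_apply]
  simp only [ContinuousLinearMap.coe_coe]
  have h1 : ((EuclideanSpace.basisFun (Fin n) ℂ).toBasis.repr
      ((adjoint a ∘L a) ((EuclideanSpace.basisFun (Fin n) ℂ).toBasis i))) i
      = inner ℂ (EuclideanSpace.single i (1:ℂ)) ((adjoint a ∘L a) (EuclideanSpace.single i 1)) := by
    simp [EuclideanSpace.basisFun_toBasis, EuclideanSpace.inner_single_left]
  rw [h1, ContinuousLinearMap.comp_apply, ContinuousLinearMap.adjoint_inner_right,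
    inner_self_eq_norm_sq_to_K]
  norm_cast

lemma opNorm_le_sqrt_sum {n : ℕ}
    (a : EuclideanSpace ℂ (Fin n) →L[ℂ] EuclideanSpace ℂ (Fin n)) :
    ‖a‖ ≤ Real.sqrt (∑ i, ‖a (EuclideanSpace.single i 1)‖ ^ 2) := by
  refine a.opNorm_le_bound (Real.sqrt_nonneg _) (fun x => ?_)
  have hx : x = ∑ i, x i • EuclideanSpace.single i (1:ℂ) := by
    conv_lhs => rw [← (EuclideanSpace.basisFun (Fin n) ℂ).sum_repr x]
    simp [EuclideanSpace.basisFun_apply, EuclideanSpace.basisFun_repr]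
  calc ‖a x‖ = ‖∑ i, x i • a (EuclideanSpace.single i 1)‖ := by
        conv_lhs => rw [hx]
        simp [map_sum]
    _ ≤ ∑ i, ‖x i‖ * ‖a (EuclideanSpace.single i 1)‖ := by
        refine (norm_sum_le _ _).trans ?_
        simp [norm_smul]
    _ ≤ Real.sqrt (∑ i, ‖x i‖ ^ 2) * Real.sqrt (∑ i, ‖a (EuclideanSpace.single i 1)‖ ^ 2) := by
        rw [← Real.sqrt_mul (by positivity)]
        rw [Real.le_sqrt (by positivity)]
        · exact Finset.sum_mul_sq_le_sq_mul_sq _ _ _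
        · positivity
    _ = Real.sqrt (∑ i, ‖a (EuclideanSpace.single i 1)‖ ^ 2) * ‖x‖ := by
        rw [EuclideanSpace.norm_eq, mul_comm]

variable {N : ℕ} {m : Fin N → ℕ}

/-- The quantity inside the square root, in concrete form. -/
noncomputable def q (μ : Fin N → ℝ) (a : BlockAlg N m) : ℝ :=
  ∑ k, (μ k / (m k : ℝ)) * ∑ i, ‖a k (EuclideanSpace.single i 1)‖ ^ 2

lemma hsNorm_eq (μ : Fin N → ℝ) (a : BlockAlg N m) : hsNorm μ a = Real.sqrt (q μ a) := by
  unfold hsNorm q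
  congr 1
  exact Finset.sum_congr rfl fun k _ => by rw [traceRe_eq]

lemma q_nonneg {μ : Fin N → ℝ} (hμ : ∀ k, 0 ≤ μ k) (a : BlockAlg N m) : 0 ≤ q μ a := by
  unfold q
  apply Finset.sum_nonneg
  intro k _
  have := hμ k
  positivity

lemma hsNorm_smul (μ : Fin N → ℝ) (a : BlockAlg N m) {r : ℝ} (hr : 0 ≤ r) :
    hsNorm μ (((r : ℂ)) • a) = r * hsNorm μ a := by
  rw [hsNorm_eq, hsNorm_eq]
  have hq : q μ (((r : ℂ)) • a) = r ^ 2 * q μ a := by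
    unfold q
    rw [Finset.mul_sum]
    refine Finset.sum_congr rfl fun k _ => ?_
    have : ∀ i, ‖(((r:ℂ)) • a) k (EuclideanSpace.single i 1)‖ ^ 2
        = r ^ 2 * ‖a k (EuclideanSpace.single i 1)‖ ^ 2 := by
      intro i
      have : (((r:ℂ)) • a) k (EuclideanSpace.single i 1)
          = (r:ℂ) • (a k (EuclideanSpace.single i 1)) := rfl
      rw [this, norm_smul, mul_pow, Complex.norm_real, Real.norm_eq_abs,
        abs_of_nonneg hr]
    simp_rw [this, Finset.mul_sum]
    exact Finset.sum_congr rfl fun i _ => by ring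
  rw [hq, Real.sqrt_mul (by positivity), Real.sqrt_sq hr]

lemma hsNorm_le_mul {μ ν : Fin N → ℝ} (hν : ∀ k, 0 ≤ ν k) {c : ℝ} (hc : 0 ≤ c)
    (h : ∀ k, μ k ≤ c * ν k) (a : BlockAlg N m) :
    hsNorm μ a ≤ Real.sqrt c * hsNorm ν a := by
  rw [hsNorm_eq, hsNorm_eq, ← Real.sqrt_mul hc]
  apply Real.sqrt_le_sqrt
  unfold q
  rw [Finset.mul_sum]
  refine Finset.sum_le_sum fun k _ => ?_
  have hS : (0:ℝ) ≤ ∑ i, ‖a k (EuclideanSpace.single i 1)‖ ^ 2 := by positivity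
  have hdiv : μ k / (m k : ℝ) ≤ c * (ν k / (m k : ℝ)) := by
    rw [← mul_div_assoc]
    gcongr
    exact h k
  calc μ k / (m k : ℝ) * ∑ i, ‖a k (EuclideanSpace.single i 1)‖ ^ 2
      ≤ c * (ν k / (m k : ℝ)) * ∑ i, ‖a k (EuclideanSpace.single i 1)‖ ^ 2 :=
        mul_le_mul_of_nonneg_right hdiv hS
    _ = c * (ν k / (m k : ℝ) * ∑ i, ‖a k (EuclideanSpace.single i 1)‖ ^ 2) := by ring

end HSAux

namespace HSAux

variable {N : ℕ} {m : Fin N → ℕ}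

lemma norm_coord_le {μ : Fin N → ℝ} (hμ : ∀ k, 0 < μ k) {a : BlockAlg N m}
    (ha : a ∈ hsBall μ) (k : Fin N) (hk : 1 ≤ m k) : ‖a k‖ ≤ Real.sqrt ((m k : ℝ) / μ k) := by
  have hq0 : 0 ≤ q μ a := q_nonneg (fun k => (hμ k).le) a
  have hq1 : q μ a ≤ 1 := by
    have := ha
    rw [hsBall, Set.mem_setOf_eq, hsNorm_eq] at this
    nlinarith [Real.sq_sqrt hq0, Real.sqrt_nonneg (q μ a)]
  have hterm : (μ k / (m k : ℝ)) * ∑ i, ‖a k (EuclideanSpace.single i 1)‖ ^ 2 ≤ 1 := by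
    refine le_trans ?_ hq1
    unfold q
    refine Finset.single_le_sum
      (f := fun j => (μ j / (m j : ℝ)) * ∑ i, ‖a j (EuclideanSpace.single i 1)‖ ^ 2)
      (fun j _ => ?_) (Finset.mem_univ k)
    have := (hμ j).le
    positivity
  have hmk : (0:ℝ) < (m k : ℝ) := by exact_mod_cast hk
  have hS : ∑ i, ‖a k (EuclideanSpace.single i 1)‖ ^ 2 ≤ (m k : ℝ) / μ k := by
    rw [div_mul_eq_mul_div, div_le_one hmk] at hterm
    rw [le_div_iff₀ (hμ k)]
    linarith [hterm]
  calc ‖a k‖ ≤ Real.sqrt (∑ i, ‖a k (EuclideanSpace.single i 1)‖ ^ 2) := opNorm_le_sqrt_sum _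
    _ ≤ Real.sqrt ((m k : ℝ) / μ k) := Real.sqrt_le_sqrt hS

lemma dist_smul_le (a : BlockAlg N m) {t : ℝ} (ht : 1 ≤ t) {B : ℝ} (hB0 : 0 ≤ B)
    (hB : ∀ k, ‖a k‖ ≤ B) :
    dist a (((t⁻¹ : ℝ) : ℂ) • a) ≤ (1 - t⁻¹) * B := by
  rw [dist_eq_norm]
  have ht0 : 0 < t := lt_of_lt_of_le one_pos ht
  have h01 : 0 ≤ 1 - t⁻¹ := by
    rw [sub_nonneg]
    exact inv_le_one_of_one_le₀ ht
  refine (pi_norm_le_iff_of_nonneg (by positivity)).mpr fun k => ?_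
  have hcoord : (a - ((t⁻¹ : ℝ) : ℂ) • a) k = (((1 - t⁻¹ : ℝ)) : ℂ) • a k := by
    show a k - ((t⁻¹ : ℝ) : ℂ) • a k = _
    push_cast
    module
  rw [hcoord]
  have hns : ‖(((1 - t⁻¹ : ℝ)) : ℂ) • a k‖ = (1 - t⁻¹) * ‖a k‖ := by
    have h : ‖(((1 - t⁻¹ : ℝ)) : ℂ) • a k‖ = ‖(((1 - t⁻¹ : ℝ)) : ℂ)‖ * ‖a k‖ := by
      with_unfolding_all exact norm_smul (((1 - t⁻¹ : ℝ)) : ℂ) (a k)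
    rw [h, Complex.norm_real, Real.norm_eq_abs, abs_of_nonneg h01]
  rw [hns]
  exact mul_le_mul_of_nonneg_left (hB k) h01

end HSAux

/-- If `μⁿ → μ^∞` componentwise (all entries positive), then
`Haus_{‖·‖_A}(D_{μⁿ}, D_{μ^∞}) → 0`. -/
theorem hausdorffDist_hsBall_tendsto_zero
    {N : ℕ} (hN : 1 ≤ N) (m : Fin N → ℕ) (hm : ∀ k, 1 ≤ m k)
    (μ : ℕ → Fin N → ℝ) (μlim : Fin N → ℝ)
    (hμpos : ∀ n k, 0 < μ n k) (hμlimpos : ∀ k, 0 < μlim k)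
    (hconv : ∀ k, Tendsto (fun n => μ n k) atTop (𝓝 (μlim k))) :
    Tendsto
      (fun n => Metric.hausdorffDist (hsBall (m := m) (μ n)) (hsBall (m := m) μlim))
      atTop (𝓝 0) := by
  classical
  haveI : Nonempty (Fin N) := Fin.pos_iff_nonempty.mp hN
  have hU : (Finset.univ : Finset (Fin N)).Nonempty := Finset.univ_nonempty
  set r : ℕ → ℝ :=
    fun n => Finset.univ.sup' hU (fun k => max (μ n k / μlim k) (μlim k / μ n k)) with hrdef
  set C : ℝ := Finset.univ.sup' hU (fun k => Real.sqrt ((m k : ℝ) / μlim k)) with hCdef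
  have hCk : ∀ k, Real.sqrt ((m k : ℝ) / μlim k) ≤ C := by
    intro k
    rw [hCdef]
    exact Finset.le_sup' (fun k => Real.sqrt ((m k : ℝ) / μlim k)) (Finset.mem_univ k)
  have hC0 : 0 ≤ C := le_trans (Real.sqrt_nonneg _) (hCk hU.choose)
  have hr1 : ∀ n, 1 ≤ r n := by
    intro n
    show (1:ℝ) ≤ Finset.univ.sup' hU fun k => max (μ n k / μlim k) (μlim k / μ n k)
    refine le_trans ?_ (Finset.le_sup' _ (Finset.mem_univ hU.choose))
    set k := hU.choose
    rcases le_total 1 (μ n k / μlim k) with h | h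
    · exact le_max_of_le_left h
    · refine le_max_of_le_right ?_
      rw [le_div_iff₀ (hμpos n k), one_mul]
      exact (div_le_one (hμlimpos k)).mp h
  set t : ℕ → ℝ := fun n => Real.sqrt (r n) with htdef
  have ht1 : ∀ n, 1 ≤ t n := by
    intro n
    rw [htdef]
    simpa using Real.sqrt_le_sqrt (hr1 n)
  have key1 : ∀ n k, μlim k ≤ r n * μ n k := by
    intro n k
    have h : μlim k / μ n k ≤ r n := by
      show _ ≤ Finset.univ.sup' hU fun k => max (μ n k / μlim k) (μlim k / μ n k)
      exact le_trans (le_max_right _ _)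
        (Finset.le_sup' (fun k => max (μ n k / μlim k) (μlim k / μ n k)) (Finset.mem_univ k))
    rwa [div_le_iff₀ (hμpos n k)] at h
  have key2 : ∀ n k, μ n k ≤ r n * μlim k := by
    intro n k
    have h : μ n k / μlim k ≤ r n := by
      show _ ≤ Finset.univ.sup' hU fun k => max (μ n k / μlim k) (μlim k / μ n k)
      exact le_trans (le_max_left _ _)
        (Finset.le_sup' (fun k => max (μ n k / μlim k) (μlim k / μ n k)) (Finset.mem_univ k))
    rwa [div_le_iff₀ (hμlimpos k)] at h
  have hbound : ∀ n,
      Metric.hausdorffDist (hsBall (m := m) (μ n)) (hsBall (m := m) μlim) ≤ (t n - 1) * C := by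
    intro n
    have htn0 : (0:ℝ) < t n := lt_of_lt_of_le one_pos (ht1 n)
    have hprod : 0 ≤ (t n - 1) * C := mul_nonneg (by linarith [ht1 n]) hC0
    refine Metric.hausdorffDist_le_of_mem_dist hprod ?_ ?_
    · intro a ha
      refine ⟨(((t n)⁻¹ : ℝ) : ℂ) • a, ?_, ?_⟩
      · rw [hsBall, Set.mem_setOf_eq, HSAux.hsNorm_smul _ _ (inv_nonneg.mpr htn0.le)]
        have hcmp : hsNorm μlim a ≤ Real.sqrt (r n) * hsNorm (μ n) a :=
          HSAux.hsNorm_le_mul (fun k => (hμpos n k).le)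
            (le_trans zero_le_one (hr1 n)) (key1 n) a
        have ha' : hsNorm (μ n) a ≤ 1 := ha
        have hle : hsNorm μlim a ≤ t n := by
          calc hsNorm μlim a ≤ t n * hsNorm (μ n) a := hcmp
            _ ≤ t n * 1 := mul_le_mul_of_nonneg_left ha' htn0.le
            _ = t n := mul_one _
        calc (t n)⁻¹ * hsNorm μlim a ≤ (t n)⁻¹ * t n :=
              mul_le_mul_of_nonneg_left hle (inv_nonneg.mpr htn0.le)
          _ = 1 := inv_mul_cancel₀ htn0.ne'
      · have hBk : ∀ k, ‖a k‖ ≤ t n * C := by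
          intro k
          refine (HSAux.norm_coord_le (hμpos n) ha k (hm k)).trans ?_
          have hmq : (m k : ℝ) / μ n k ≤ r n * ((m k : ℝ) / μlim k) := by
            rw [← mul_div_assoc, div_le_div_iff₀ (hμpos n k) (hμlimpos k)]
            nlinarith [mul_le_mul_of_nonneg_left (key1 n k)
              (Nat.cast_nonneg (m k) : (0:ℝ) ≤ (m k : ℝ))]
          calc Real.sqrt ((m k : ℝ) / μ n k)
              ≤ Real.sqrt (r n * ((m k : ℝ) / μlim k)) := Real.sqrt_le_sqrt hmq
            _ = t n * Real.sqrt ((m k : ℝ) / μlim k) := by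
                rw [Real.sqrt_mul (by linarith [hr1 n])]
            _ ≤ t n * C := mul_le_mul_of_nonneg_left (hCk k) htn0.le
        refine (HSAux.dist_smul_le a (ht1 n) (mul_nonneg htn0.le hC0) hBk).trans ?_
        have heq : (1 - (t n)⁻¹) * (t n * C) = (t n - 1) * C := by
          field_simp
        rw [heq]
    · intro a ha
      refine ⟨(((t n)⁻¹ : ℝ) : ℂ) • a, ?_, ?_⟩
      · rw [hsBall, Set.mem_setOf_eq, HSAux.hsNorm_smul _ _ (inv_nonneg.mpr htn0.le)]
        have hcmp : hsNorm (μ n) a ≤ Real.sqrt (r n) * hsNorm μlim a :=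
          HSAux.hsNorm_le_mul (fun k => (hμlimpos k).le)
            (le_trans zero_le_one (hr1 n)) (key2 n) a
        have ha' : hsNorm μlim a ≤ 1 := ha
        have hle : hsNorm (μ n) a ≤ t n := by
          calc hsNorm (μ n) a ≤ t n * hsNorm μlim a := hcmp
            _ ≤ t n * 1 := mul_le_mul_of_nonneg_left ha' htn0.le
            _ = t n := mul_one _
        calc (t n)⁻¹ * hsNorm (μ n) a ≤ (t n)⁻¹ * t n :=
              mul_le_mul_of_nonneg_left hle (inv_nonneg.mpr htn0.le)
          _ = 1 := inv_mul_cancel₀ htn0.ne'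
      · have hBk : ∀ k, ‖a k‖ ≤ C :=
          fun k => (HSAux.norm_coord_le hμlimpos ha k (hm k)).trans (hCk k)
        refine (HSAux.dist_smul_le a (ht1 n) hC0 hBk).trans ?_
        have h2 : 1 - (t n)⁻¹ ≤ t n - 1 := by
          nlinarith [sq_nonneg (t n - 1), mul_inv_cancel₀ htn0.ne']
        exact mul_le_mul_of_nonneg_right h2 hC0
  have hrt : Tendsto r atTop (𝓝 1) := by
    have hmain : Tendsto
        (fun n => Finset.univ.sup' hU
          (fun k => (fun k n => max (μ n k / μlim k) (μlim k / μ n k)) k n))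
        atTop (𝓝 (Finset.univ.sup' hU (fun _ : Fin N => (1:ℝ)))) := by
      refine Filter.Tendsto.finset_sup'_nhds_apply hU ?_
      intro k _
      have h1 : Tendsto (fun n => μ n k / μlim k) atTop (𝓝 1) := by
        have := (hconv k).div_const (μlim k)
        rwa [div_self (hμlimpos k).ne'] at this
      have h2 : Tendsto (fun n => μlim k / μ n k) atTop (𝓝 1) := by
        have := (tendsto_const_nhds (x := μlim k) (f := atTop)).div (hconv k) (hμlimpos k).ne'
        rwa [div_self (hμlimpos k).ne'] at this
      simpa using h1.max h2
    rw [hrdef]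
    simpa [Finset.sup'_const] using hmain
  have htt : Tendsto t atTop (𝓝 1) := by
    have := hrt.sqrt
    simpa using this
  have hg : Tendsto (fun n => (t n - 1) * C) atTop (𝓝 0) := by
    have := (htt.sub_const 1).mul_const C
    simpa using this
  exact squeeze_zero (fun n => Metric.hausdorffDist_nonneg) hbound hg
end

section
/- Let μ and ν be vectors of positive reals of length N. Then the Hausdorff distance between the unit balls D_ν and D_μ with respect to the C*-norm satisfies Haus_{‖·‖_A}(D_ν, D_μ) ≤ max{ max_{1≤k≤N} |1 − √(μ_k)/√(ν_k)| · √(m_k)/√(μ_k), max_{1≤k≤N} |1 − √(ν_k)/√(μ_k)| · √(m_k)/√(ν_k) }. -/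
open Filter Topology

noncomputable abbrev E (n : ℕ) := EuclideanSpace ℂ (Fin n)

lemma traceRe_eq {n : ℕ} (T : E n →L[ℂ] E n) :
    ((LinearMap.trace ℂ (E n)
      ((ContinuousLinearMap.adjoint T ∘L T : E n →L[ℂ] E n) : E n →ₗ[ℂ] E n)).re)
    = ∑ j, ‖T (EuclideanSpace.single j 1)‖ ^ 2 := by
  rw [LinearMap.trace_eq_matrix_trace ℂ (EuclideanSpace.basisFun (Fin n) ℂ).toBasis]
  rw [Matrix.trace]
  rw [Complex.re_sum]
  congr 1
  ext j
  rw [Matrix.diag, LinearMap.toMatrix_apply]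
  simp only [OrthonormalBasis.coe_toBasis, OrthonormalBasis.coe_toBasis_repr_apply,
    EuclideanSpace.basisFun_repr, EuclideanSpace.basisFun_apply]
  have h1 : ((ContinuousLinearMap.adjoint T ∘L T) (EuclideanSpace.single j 1)) j
      = inner ℂ (EuclideanSpace.single j (1:ℂ))
          ((ContinuousLinearMap.adjoint T ∘L T) (EuclideanSpace.single j 1)) := by
    rw [EuclideanSpace.inner_single_left]; simp
  simp only [ContinuousLinearMap.coe_coe]
  rw [h1]
  simp only [ContinuousLinearMap.coe_comp', Function.comp_apply]
  rw [ContinuousLinearMap.adjoint_inner_right]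
  rw [inner_self_eq_norm_sq_to_K]
  norm_cast

lemma opNorm_le_sqrt_sum {n : ℕ} (T : E n →L[ℂ] E n) :
    ‖T‖ ≤ Real.sqrt (∑ j, ‖T (EuclideanSpace.single j 1)‖ ^ 2) := by
  apply ContinuousLinearMap.opNorm_le_bound _ (Real.sqrt_nonneg _)
  intro x
  have hx : T x = ∑ j, x j • T (EuclideanSpace.single j 1) := by
    conv_lhs => rw [← (EuclideanSpace.basisFun (Fin n) ℂ).toBasis.sum_repr x]
    rw [map_sum]
    refine Finset.sum_congr rfl fun j _ => ?_
    simp [EuclideanSpace.basisFun_apply]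
  rw [hx]
  calc ‖∑ j, x j • T (EuclideanSpace.single j 1)‖
      ≤ ∑ j, ‖x j‖ * ‖T (EuclideanSpace.single j 1)‖ := by
        refine (norm_sum_le _ _).trans_eq ?_
        exact Finset.sum_congr rfl fun j _ => norm_smul _ _
    _ ≤ Real.sqrt (∑ j, ‖x j‖ ^ 2) * Real.sqrt (∑ j, ‖T (EuclideanSpace.single j 1)‖ ^ 2) := by
        have h := Finset.sum_mul_sq_le_sq_mul_sq Finset.univ
          (fun j => ‖x j‖) (fun j => ‖T (EuclideanSpace.single j 1)‖)
        have hnn : (0:ℝ) ≤ ∑ j, ‖x j‖ * ‖T (EuclideanSpace.single j 1)‖ :=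
          Finset.sum_nonneg fun j _ => mul_nonneg (norm_nonneg _) (norm_nonneg _)
        nlinarith [Real.sq_sqrt (Finset.sum_nonneg (fun j (_ : j ∈ Finset.univ) =>
            sq_nonneg ‖x j‖)),
          Real.sq_sqrt (Finset.sum_nonneg (fun j (_ : j ∈ Finset.univ) =>
            sq_nonneg ‖T (EuclideanSpace.single j 1)‖)),
          Real.sqrt_nonneg (∑ j, ‖x j‖ ^ 2),
          Real.sqrt_nonneg (∑ j, ‖T (EuclideanSpace.single j 1)‖ ^ 2),
          mul_nonneg (Real.sqrt_nonneg (∑ j, ‖x j‖ ^ 2))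
            (Real.sqrt_nonneg (∑ j, ‖T (EuclideanSpace.single j 1)‖ ^ 2))]
    _ = Real.sqrt (∑ j, ‖T (EuclideanSpace.single j 1)‖ ^ 2) * ‖x‖ := by
        rw [EuclideanSpace.norm_eq x, mul_comm]


lemma hsNorm_eq {N : ℕ} {m : Fin N → ℕ} (μ : Fin N → ℝ) (a : BlockAlg N m) :
    hsNorm μ a = Real.sqrt (∑ k, (μ k / (m k : ℝ)) *
      ∑ j, ‖a k (EuclideanSpace.single j 1)‖ ^ 2) := by
  unfold hsNorm
  congr 1
  exact Finset.sum_congr rfl fun k _ => by rw [traceRe_eq]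

lemma key {N : ℕ} (hN : 1 ≤ N) (m : Fin N → ℕ) (hm : ∀ k, 1 ≤ m k)
    (μ ν : Fin N → ℝ) (hμpos : ∀ k, 0 < μ k) (hνpos : ∀ k, 0 < ν k)
    (a : BlockAlg N m) (ha : a ∈ hsBall (m := m) ν) :
    ∃ b ∈ hsBall (m := m) μ, dist a b ≤
      Finset.univ.sup' (Finset.univ_nonempty_iff.mpr ⟨⟨0, hN⟩⟩)
        (fun k => |1 - Real.sqrt (ν k) / Real.sqrt (μ k)| *
          (Real.sqrt (m k) / Real.sqrt (ν k))) := by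
  set c : Fin N → ℝ := fun k => Real.sqrt (ν k) / Real.sqrt (μ k) with hc
  set S : Fin N → ℝ := fun k => ∑ j, ‖a k (EuclideanSpace.single j 1)‖ ^ 2 with hS
  have hSnn : ∀ k, 0 ≤ S k := fun k => Finset.sum_nonneg fun j _ => sq_nonneg _
  have hmpos : ∀ k, (0:ℝ) < (m k : ℝ) := fun k => by
    exact_mod_cast Nat.lt_of_lt_of_le Nat.zero_lt_one (hm k)
  have hsum : ∑ k, (ν k / (m k : ℝ)) * S k ≤ 1 := by
    have h1 : hsNorm ν a ≤ 1 := ha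
    rw [hsNorm_eq] at h1
    have hnn : (0:ℝ) ≤ ∑ k, (ν k / (m k : ℝ)) *
        ∑ j, ‖a k (EuclideanSpace.single j 1)‖ ^ 2 :=
      Finset.sum_nonneg fun k _ => mul_nonneg
        (div_nonneg (hνpos k).le (hmpos k).le) (hSnn k)
    have := Real.sq_sqrt hnn
    show ∑ k, (ν k / (m k : ℝ)) * ∑ j, ‖a k (EuclideanSpace.single j 1)‖ ^ 2 ≤ 1
    nlinarith [Real.sqrt_nonneg (∑ k, (ν k / (m k : ℝ)) *
      ∑ j, ‖a k (EuclideanSpace.single j 1)‖ ^ 2)]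
  have hcsq : ∀ k, c k ^ 2 = ν k / μ k := fun k => by
    rw [hc, div_pow, Real.sq_sqrt (hνpos k).le, Real.sq_sqrt (hμpos k).le]
  -- the candidate
  refine ⟨fun k => ((c k : ℝ) : ℂ) • a k, ?_, ?_⟩
  · show hsNorm μ _ ≤ 1
    rw [hsNorm_eq]
    have : ∀ k, (μ k / (m k : ℝ)) *
        ∑ j, ‖(((c k : ℝ) : ℂ) • a k) (EuclideanSpace.single j 1)‖ ^ 2
        = (ν k / (m k : ℝ)) * S k := by
      intro k
      have h1 : ∀ j, ‖(((c k : ℝ) : ℂ) • a k) (EuclideanSpace.single j 1)‖ ^ 2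
          = c k ^ 2 * ‖a k (EuclideanSpace.single j 1)‖ ^ 2 := by
        intro j
        rw [ContinuousLinearMap.smul_apply, norm_smul, Complex.norm_real,
          Real.norm_eq_abs, mul_pow, sq_abs]
      simp_rw [h1, ← Finset.mul_sum, hcsq k]
      show μ k / (m k : ℝ) * (ν k / μ k * ∑ j, ‖a k (EuclideanSpace.single j 1)‖ ^ 2)
        = ν k / (m k : ℝ) * ∑ j, ‖a k (EuclideanSpace.single j 1)‖ ^ 2
      have hμ0 : μ k ≠ 0 := (hμpos k).ne'
      have e2 : μ k * (ν k / μ k) = ν k := by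
        rw [mul_comm, div_mul_cancel₀ _ hμ0]
      calc μ k / (m k : ℝ) * (ν k / μ k * ∑ j, ‖a k (EuclideanSpace.single j 1)‖ ^ 2)
          = μ k * (ν k / μ k) / (m k : ℝ) * ∑ j, ‖a k (EuclideanSpace.single j 1)‖ ^ 2 := by
            ring
        _ = ν k / (m k : ℝ) * ∑ j, ‖a k (EuclideanSpace.single j 1)‖ ^ 2 := by rw [e2]
    rw [Finset.sum_congr rfl fun k _ => this k]
    calc Real.sqrt (∑ k, (ν k / (m k : ℝ)) * S k) ≤ Real.sqrt 1 :=
          Real.sqrt_le_sqrt hsum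
      _ = 1 := Real.sqrt_one
  · -- the distance bound
    set R := Finset.univ.sup' (Finset.univ_nonempty_iff.mpr ⟨⟨0, hN⟩⟩)
      (fun k => |1 - c k| * (Real.sqrt (m k) / Real.sqrt (ν k))) with hR
    have hRnn : 0 ≤ R := by
      refine le_trans ?_ (Finset.le_sup' _ (Finset.mem_univ ⟨0, hN⟩))
      exact mul_nonneg (abs_nonneg _)
        (div_nonneg (Real.sqrt_nonneg _) (Real.sqrt_nonneg _))
    rw [dist_pi_le_iff hRnn]
    intro k
    have hblock : dist (a k) (((c k : ℝ) : ℂ) • a k) = |1 - c k| * ‖a k‖ := by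
      rw [dist_eq_norm]
      have h4 : a k - ((c k : ℝ) : ℂ) • a k = (((1 - c k : ℝ)) : ℂ) • a k := by
        push_cast
        module
      rw [h4, @norm_smul ℂ _ _ _ _ _ _ (a k), Complex.norm_real, Real.norm_eq_abs]
    rw [hblock]
    have hak : ‖a k‖ ≤ Real.sqrt (m k) / Real.sqrt (ν k) := by
      have h1 : ‖a k‖ ≤ Real.sqrt (S k) := opNorm_le_sqrt_sum (a k)
      have h2 : S k ≤ (m k : ℝ) / ν k := by
        have h3 : (ν k / (m k : ℝ)) * S k ≤ 1 := by
          refine le_trans ?_ hsum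
          refine Finset.single_le_sum (f := fun k => (ν k / (m k : ℝ)) * S k)
            (fun i _ => mul_nonneg (div_nonneg (hνpos i).le (hmpos i).le) (hSnn i))
            (Finset.mem_univ k)
        rw [div_mul_eq_mul_div, div_le_one (hmpos k)] at h3
        rw [le_div_iff₀ (hνpos k)]
        linarith [h3]
      refine h1.trans ?_
      rw [← Real.sqrt_div (Nat.cast_nonneg _) (ν k)]
      exact Real.sqrt_le_sqrt h2
    calc |1 - c k| * ‖a k‖ ≤ |1 - c k| * (Real.sqrt (m k) / Real.sqrt (ν k)) :=
          mul_le_mul_of_nonneg_left hak (abs_nonneg _)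
      _ ≤ R := by
          rw [hR]
          exact Finset.le_sup'
            (f := fun k => |1 - c k| * (Real.sqrt (m k) / Real.sqrt (ν k)))
            (Finset.mem_univ k)


/-- The Hausdorff distance between the unit balls `D_ν` and `D_μ`
with respect to the C*-norm is bounded by
`max{ maxₖ |1 − √μₖ/√νₖ|·√mₖ/√μₖ , maxₖ |1 − √νₖ/√μₖ|·√mₖ/√νₖ }`. -/
theorem hausdorffDist_hsBall_le
    {N : ℕ} (hN : 1 ≤ N) (m : Fin N → ℕ) (hm : ∀ k, 1 ≤ m k)
    (μ ν : Fin N → ℝ) (hμpos : ∀ k, 0 < μ k) (hνpos : ∀ k, 0 < ν k) :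
    Metric.hausdorffDist (hsBall (m := m) ν) (hsBall (m := m) μ) ≤
      max
        (Finset.univ.sup' (Finset.univ_nonempty_iff.mpr ⟨⟨0, hN⟩⟩)
          (fun k => |1 - Real.sqrt (μ k) / Real.sqrt (ν k)| *
            (Real.sqrt (m k) / Real.sqrt (μ k))))
        (Finset.univ.sup' (Finset.univ_nonempty_iff.mpr ⟨⟨0, hN⟩⟩)
          (fun k => |1 - Real.sqrt (ν k) / Real.sqrt (μ k)| *
            (Real.sqrt (m k) / Real.sqrt (ν k)))) := by
  set R1 := Finset.univ.sup' (Finset.univ_nonempty_iff.mpr ⟨⟨0, hN⟩⟩)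
    (fun k => |1 - Real.sqrt (μ k) / Real.sqrt (ν k)| *
      (Real.sqrt (m k) / Real.sqrt (μ k)))
  set R2 := Finset.univ.sup' (Finset.univ_nonempty_iff.mpr ⟨⟨0, hN⟩⟩)
    (fun k => |1 - Real.sqrt (ν k) / Real.sqrt (μ k)| *
      (Real.sqrt (m k) / Real.sqrt (ν k)))
  have hR2nn : 0 ≤ R2 := by
    refine le_trans ?_ (Finset.le_sup' _ (Finset.mem_univ ⟨0, hN⟩))
    exact mul_nonneg (abs_nonneg _)
      (div_nonneg (Real.sqrt_nonneg _) (Real.sqrt_nonneg _))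
  refine Metric.hausdorffDist_le_of_mem_dist (le_trans hR2nn (le_max_right _ _)) ?_ ?_
  · intro x hx
    obtain ⟨y, hy, hd⟩ := key hN m hm μ ν hμpos hνpos x hx
    exact ⟨y, hy, hd.trans (le_max_right _ _)⟩
  · intro x hx
    obtain ⟨y, hy, hd⟩ := key hN m hm ν μ hνpos hμpos x hx
    exact ⟨y, hy, hd.trans (le_max_left _ _)⟩
end
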